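/- arXiv:1810.05279 — 5 statements merged into one kernel-verified Lean document; each statement's English description precedes it below -/
import Mathlib

section
/- Let G be the niche graph of a bipartite tournament D, and let u, v be distinct vertices in the same partite set of D. Then u and v are nonadjacent in G if and only if N⁺_D(u) = N⁻_D(v). -/
structure BipTournament (α : Type*) where
  U : Set α
  V : Set α
  A : α → α → Prop
  disj : Disjoint U V
  cover : U ∪ V = Set.univ
  orient : ∀ u ∈ U, ∀ v ∈ V, Xor' (A u v) (A v u)
  arcs : ∀ x y, A x y → (x ∈ U ∧ y ∈ V) ∨ (x ∈ V ∧ y ∈ U)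

def BipTournament.outN {α : Type*} (D : BipTournament α) (x : α) : Set α := {y | D.A x y}

def BipTournament.inN {α : Type*} (D : BipTournament α) (x : α) : Set α := {y | D.A y x}

def BipTournament.niche {α : Type*} (D : BipTournament α) : SimpleGraph α where
  Adj x y := x ≠ y ∧ ((∃ w, D.A x w ∧ D.A y w) ∨ (∃ w, D.A w x ∧ D.A w y))
  symm := ⟨by
    rintro x y ⟨h, h'⟩
    exact ⟨h.symm, h'.imp (fun ⟨w, a, b⟩ => ⟨w, b, a⟩) (fun ⟨w, a, b⟩ => ⟨w, b, a⟩)⟩⟩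
  loopless := ⟨fun x h => h.1 rfl⟩

def BipTournament.swap {α : Type*} (D : BipTournament α) : BipTournament α where
  U := D.V
  V := D.U
  A := D.A
  disj := D.disj.symm
  cover := by rw [Set.union_comm]; exact D.cover
  orient := fun u hu v hv => by
    rcases D.orient v hv u hu with ⟨h1, h2⟩ | ⟨h1, h2⟩
    · exact Or.inr ⟨h1, h2⟩
    · exact Or.inl ⟨h1, h2⟩
  arcs := fun x y hxy => (D.arcs x y hxy).symm

lemma aux {α : Type*} (D : BipTournament α) (u v : α) (huv : u ≠ v)
    (hu : u ∈ D.U) (hv : v ∈ D.U) :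
    ¬ D.niche.Adj u v ↔ D.outN u = D.inN v := by
  constructor
  · intro hn
    ext w
    simp only [BipTournament.outN, BipTournament.inN, Set.mem_setOf_eq]
    constructor
    · intro huw
      have hwV : w ∈ D.V := by
        rcases D.arcs u w huw with ⟨_, h2⟩ | ⟨h1, _⟩
        · exact h2
        · exact absurd hu (Set.disjoint_right.mp D.disj h1)
      rcases D.orient v hv w hwV with ⟨hvw, _⟩ | ⟨hwv, _⟩
      · exact absurd ⟨huv, Or.inl ⟨w, huw, hvw⟩⟩ hn
      · exact hwv
    · intro hwv
      have hwV : w ∈ D.V := by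
        rcases D.arcs w v hwv with ⟨h1, h2⟩ | ⟨h1, _⟩
        · exact absurd h2 (Set.disjoint_left.mp D.disj hv)
        · exact h1
      rcases D.orient u hu w hwV with ⟨huw, _⟩ | ⟨hwu, _⟩
      · exact huw
      · exact absurd ⟨huv, Or.inr ⟨w, hwu, hwv⟩⟩ hn
  · rintro he ⟨_, ⟨w, huw, hvw⟩ | ⟨w, hwu, hwv⟩⟩
    · have hwV : w ∈ D.V := by
        rcases D.arcs u w huw with ⟨_, h2⟩ | ⟨h1, _⟩
        · exact h2
        · exact absurd hu (Set.disjoint_right.mp D.disj h1)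
      have hwvin : D.A w v := by
        have : w ∈ D.outN u := huw
        rw [he] at this; exact this
      rcases D.orient v hv w hwV with ⟨_, h2⟩ | ⟨_, h2⟩
      · exact h2 hwvin
      · exact h2 hvw
    · have hwV : w ∈ D.V := by
        rcases D.arcs w u hwu with ⟨h1, h2⟩ | ⟨h1, _⟩
        · exact absurd h2 (Set.disjoint_left.mp D.disj hu)
        · exact h1
      have huwout : D.A u w := by
        have : w ∈ D.inN v := hwv
        rw [← he] at this; exact this
      rcases D.orient u hu w hwV with ⟨_, h2⟩ | ⟨_, h2⟩
      · exact h2 hwu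
      · exact h2 huwout

theorem stmt5 {α : Type*} (D : BipTournament α) (u v : α) (huv : u ≠ v)
    (h : (u ∈ D.U ∧ v ∈ D.U) ∨ (u ∈ D.V ∧ v ∈ D.V)) :
    ¬ D.niche.Adj u v ↔ D.outN u = D.inN v := by
  rcases h with ⟨hu, hv⟩ | ⟨hu, hv⟩
  · exact aux D u v huv hu hv
  · exact aux D.swap u v huv hu hv
end

section
/- The niche graph of a bipartite tournament contains no induced path on 4 vertices. -/
theorem stmt9 {α : Type*} (D : BipTournament α) :
    ¬ ∃ x y z w : α, x ≠ y ∧ x ≠ z ∧ x ≠ w ∧ y ≠ z ∧ y ≠ w ∧ z ≠ w ∧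
      D.niche.Adj x y ∧ D.niche.Adj y z ∧ D.niche.Adj z w ∧
      ¬ D.niche.Adj x z ∧ ¬ D.niche.Adj x w ∧ ¬ D.niche.Adj y w := by
  rintro ⟨x, y, z, w, hxy, hxz, hxw, hyz, hyw, hzw, axy, ayz, azw, nxz, nxw, nyw⟩
  have hdisj : ∀ a, a ∈ D.U → a ∈ D.V → False := fun a h1 h2 =>
    Set.disjoint_left.mp D.disj h1 h2
  -- adjacent vertices lie in the same part
  have samePart : ∀ a b, D.niche.Adj a b →
      (a ∈ D.U ∧ b ∈ D.U) ∨ (a ∈ D.V ∧ b ∈ D.V) := by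
    rintro a b ⟨-, ⟨c, h1, h2⟩ | ⟨c, h1, h2⟩⟩
    · rcases D.arcs a c h1 with ⟨ha, hc⟩ | ⟨ha, hc⟩ <;>
        rcases D.arcs b c h2 with ⟨hb, hc'⟩ | ⟨hb, hc'⟩ <;>
        first
          | exact Or.inl ⟨ha, hb⟩
          | exact Or.inr ⟨ha, hb⟩
          | exact (hdisj c hc hc').elim
          | exact (hdisj c hc' hc).elim
    · rcases D.arcs c a h1 with ⟨hc, ha⟩ | ⟨hc, ha⟩ <;>
        rcases D.arcs c b h2 with ⟨hc', hb⟩ | ⟨hc', hb⟩ <;>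
        first
          | exact Or.inl ⟨ha, hb⟩
          | exact Or.inr ⟨ha, hb⟩
          | exact (hdisj c hc hc').elim
          | exact (hdisj c hc' hc).elim
  -- totality of the orientation between opposite parts
  have tot : ∀ a b, (a ∈ D.U ∧ b ∈ D.V) ∨ (a ∈ D.V ∧ b ∈ D.U) →
      D.A a b ∨ D.A b a := by
    rintro a b (⟨ha, hb⟩ | ⟨ha, hb⟩)
    · exact Or.imp And.left And.left (D.orient a ha b hb)
    · exact Or.symm (Or.imp And.left And.left (D.orient b hb a ha))
  -- all four vertices are in the same part
  have hsame : (x ∈ D.U ∧ y ∈ D.U ∧ z ∈ D.U ∧ w ∈ D.U) ∨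
      (x ∈ D.V ∧ y ∈ D.V ∧ z ∈ D.V ∧ w ∈ D.V) := by
    rcases samePart x y axy with ⟨hx, hy⟩ | ⟨hx, hy⟩ <;>
      rcases samePart y z ayz with ⟨hy', hz⟩ | ⟨hy', hz⟩ <;>
      rcases samePart z w azw with ⟨hz', hw⟩ | ⟨hz', hw⟩ <;>
      first
        | exact Or.inl ⟨hx, hy, hz, hw⟩
        | exact Or.inr ⟨hx, hy, hz, hw⟩
        | exact (hdisj y hy hy').elim
        | exact (hdisj y hy' hy).elim
        | exact (hdisj z hz hz').elim
        | exact (hdisj z hz' hz).elim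
  obtain ⟨-, ⟨v, hyv, hzv⟩ | ⟨v, hvy, hvz⟩⟩ := ayz
  · -- v is a common out-neighbor of y and z
    have hvpart : (y ∈ D.U ∧ v ∈ D.V) ∨ (y ∈ D.V ∧ v ∈ D.U) := D.arcs y v hyv
    have oppxv : (x ∈ D.U ∧ v ∈ D.V) ∨ (x ∈ D.V ∧ v ∈ D.U) := by
      rcases hsame with ⟨hx, hy, -, -⟩ | ⟨hx, hy, -, -⟩ <;>
        rcases hvpart with ⟨hy', hv⟩ | ⟨hy', hv⟩ <;>
        first
          | exact Or.inl ⟨hx, hv⟩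
          | exact Or.inr ⟨hx, hv⟩
          | exact (hdisj y hy hy').elim
          | exact (hdisj y hy' hy).elim
    have oppwv : (w ∈ D.U ∧ v ∈ D.V) ∨ (w ∈ D.V ∧ v ∈ D.U) := by
      rcases hsame with ⟨-, hy, -, hw⟩ | ⟨-, hy, -, hw⟩ <;>
        rcases hvpart with ⟨hy', hv⟩ | ⟨hy', hv⟩ <;>
        first
          | exact Or.inl ⟨hw, hv⟩
          | exact Or.inr ⟨hw, hv⟩
          | exact (hdisj y hy hy').elim
          | exact (hdisj y hy' hy).elim
    have hvw : D.A v w :=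
      (tot w v oppwv).resolve_left (fun h => nyw ⟨hyw, Or.inl ⟨v, hyv, h⟩⟩)
    have hvx : D.A v x :=
      (tot x v oppxv).resolve_left (fun h => nxz ⟨hxz, Or.inl ⟨v, h, hzv⟩⟩)
    exact nxw ⟨hxw, Or.inr ⟨v, hvx, hvw⟩⟩
  · -- v is a common in-neighbor of y and z
    have hvpart : (v ∈ D.U ∧ y ∈ D.V) ∨ (v ∈ D.V ∧ y ∈ D.U) := D.arcs v y hvy
    have oppxv : (x ∈ D.U ∧ v ∈ D.V) ∨ (x ∈ D.V ∧ v ∈ D.U) := by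
      rcases hsame with ⟨hx, hy, -, -⟩ | ⟨hx, hy, -, -⟩ <;>
        rcases hvpart with ⟨hv, hy'⟩ | ⟨hv, hy'⟩ <;>
        first
          | exact Or.inl ⟨hx, hv⟩
          | exact Or.inr ⟨hx, hv⟩
          | exact (hdisj y hy hy').elim
          | exact (hdisj y hy' hy).elim
    have oppwv : (w ∈ D.U ∧ v ∈ D.V) ∨ (w ∈ D.V ∧ v ∈ D.U) := by
      rcases hsame with ⟨-, hy, -, hw⟩ | ⟨-, hy, -, hw⟩ <;>
        rcases hvpart with ⟨hv, hy'⟩ | ⟨hv, hy'⟩ <;>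
        first
          | exact Or.inl ⟨hw, hv⟩
          | exact Or.inr ⟨hw, hv⟩
          | exact (hdisj y hy hy').elim
          | exact (hdisj y hy' hy).elim
    have hwv : D.A w v :=
      (tot w v oppwv).resolve_right (fun h => nyw ⟨hyw, Or.inr ⟨v, hvy, h⟩⟩)
    have hxv : D.A x v :=
      (tot x v oppxv).resolve_right (fun h => nxz ⟨hxz, Or.inr ⟨v, h, hvz⟩⟩)
    exact nxw ⟨hxw, Or.inl ⟨v, hxv, hwv⟩⟩
end

section
/- For all positive integers i, j, k, l, there exists a bipartite tournament with partite sets of sizes i+j and k+l whose niche graph is the disjoint union (K_i ∪ K_j) ∪ (K_k ∪ K_l). -/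
theorem stmt13 (i j k l : ℕ) (hi : 0 < i) (hj : 0 < j) (hk : 0 < k) (hl : 0 < l) :
    ∃ D : BipTournament (Fin (i + j) ⊕ Fin (k + l)),
      D.U = Set.range Sum.inl ∧ D.V = Set.range Sum.inr ∧
      D.niche = SimpleGraph.fromRel (fun x y =>
        match x, y with
        | Sum.inl a, Sum.inl b => (a.val < i ∧ b.val < i) ∨ (i ≤ a.val ∧ i ≤ b.val)
        | Sum.inr a, Sum.inr b => (a.val < k ∧ b.val < k) ∨ (k ≤ a.val ∧ k ≤ b.val)
        | _, _ => False) := by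
  refine ⟨{
    U := Set.range Sum.inl
    V := Set.range Sum.inr
    A := fun x y => match x, y with
      | Sum.inl a, Sum.inr b => (a.val < i ∧ b.val < k) ∨ (i ≤ a.val ∧ k ≤ b.val)
      | Sum.inr b, Sum.inl a => (b.val < k ∧ i ≤ a.val) ∨ (k ≤ b.val ∧ a.val < i)
      | _, _ => False
    disj := by
      rw [Set.disjoint_left]
      rintro _ ⟨a, rfl⟩ ⟨b, h⟩
      cases h
    cover := by
      ext x; cases x <;> simp
    orient := by
      rintro _ ⟨a, rfl⟩ _ ⟨b, rfl⟩
      simp only [Xor']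
      rw [xor_def]
      omega
    arcs := by
      rintro (a | a) (b | b) h
      · exact h.elim
      · exact Or.inl ⟨⟨a, rfl⟩, ⟨b, rfl⟩⟩
      · exact Or.inr ⟨⟨a, rfl⟩, ⟨b, rfl⟩⟩
      · exact h.elim }, rfl, rfl, ?_⟩
  ext x y
  simp only [BipTournament.niche, SimpleGraph.fromRel_adj]
  constructor
  · rintro ⟨hne, h⟩
    refine ⟨hne, ?_⟩
    left
    rcases x with a | a <;> rcases y with b | b
    · rcases h with ⟨w, hw1, hw2⟩ | ⟨w, hw1, hw2⟩ <;> rcases w with c | c <;>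
        simp only at hw1 hw2 <;> omega
    · rcases h with ⟨w, hw1, hw2⟩ | ⟨w, hw1, hw2⟩ <;> rcases w with c | c <;>
        simp only at hw1 hw2 <;> exact hw1.elim <|> exact hw2.elim
    · rcases h with ⟨w, hw1, hw2⟩ | ⟨w, hw1, hw2⟩ <;> rcases w with c | c <;>
        simp only at hw1 hw2 <;> exact hw1.elim <|> exact hw2.elim
    · rcases h with ⟨w, hw1, hw2⟩ | ⟨w, hw1, hw2⟩ <;> rcases w with c | c <;>
        simp only at hw1 hw2 <;> omega
  · rintro ⟨hne, h⟩
    refine ⟨hne, ?_⟩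
    rcases x with a | a <;> rcases y with b | b
    · rcases h with (⟨h1, h2⟩ | ⟨h1, h2⟩) | (⟨h1, h2⟩ | ⟨h1, h2⟩)
      · exact Or.inl ⟨Sum.inr ⟨0, by omega⟩, Or.inl ⟨h1, hk⟩, Or.inl ⟨h2, hk⟩⟩
      · exact Or.inl ⟨Sum.inr ⟨k, by omega⟩, Or.inr ⟨h1, le_refl k⟩, Or.inr ⟨h2, le_refl k⟩⟩
      · exact Or.inl ⟨Sum.inr ⟨0, by omega⟩, Or.inl ⟨h2, hk⟩, Or.inl ⟨h1, hk⟩⟩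
      · exact Or.inl ⟨Sum.inr ⟨k, by omega⟩, Or.inr ⟨h2, le_refl k⟩, Or.inr ⟨h1, le_refl k⟩⟩
    · exact absurd h (by simp)
    · exact absurd h (by simp)
    · rcases h with (⟨h1, h2⟩ | ⟨h1, h2⟩) | (⟨h1, h2⟩ | ⟨h1, h2⟩)
      · exact Or.inl ⟨Sum.inl ⟨i, by omega⟩, Or.inl ⟨h1, le_refl i⟩, Or.inl ⟨h2, le_refl i⟩⟩
      · exact Or.inl ⟨Sum.inl ⟨0, by omega⟩, Or.inr ⟨h1, hi⟩, Or.inr ⟨h2, hi⟩⟩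
      · exact Or.inl ⟨Sum.inl ⟨i, by omega⟩, Or.inl ⟨h2, le_refl i⟩, Or.inl ⟨h1, le_refl i⟩⟩
      · exact Or.inl ⟨Sum.inl ⟨0, by omega⟩, Or.inr ⟨h2, hi⟩, Or.inr ⟨h1, hi⟩⟩
end

section
/- Let G be the niche graph of a bipartite tournament D with bipartition (U,V), and suppose G[U] is disconnected. Then every connected component of G (of both G[U] and G[V]) is a complete graph. -/
namespace BipAux

variable {α : Type*} (D : BipTournament α)

lemma notUV {x : α} (hu : x ∈ D.U) (hv : x ∈ D.V) : False :=
  Set.disjoint_left.mp D.disj hu hv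

lemma memUV (x : α) : x ∈ D.U ∨ x ∈ D.V := by
  have : x ∈ D.U ∪ D.V := D.cover ▸ Set.mem_univ x
  exact this

lemma adjU {x y : α} (hx : x ∈ D.U) (h : D.niche.Adj x y) : y ∈ D.U := by
  rcases memUV D y with hy | hy
  · exact hy
  exfalso
  rcases h.2 with ⟨w, hxw, hyw⟩ | ⟨w, hwx, hwy⟩
  · rcases D.arcs x w hxw with ⟨_, hwV⟩ | ⟨hxV, _⟩
    · rcases D.arcs y w hyw with ⟨hyU, _⟩ | ⟨_, hwU⟩
      · exact notUV D hyU hy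
      · exact notUV D hwU hwV
    · exact notUV D hx hxV
  · rcases D.arcs w x hwx with ⟨_, hxV⟩ | ⟨hwV, _⟩
    · exact notUV D hx hxV
    · rcases D.arcs w y hwy with ⟨hwU, _⟩ | ⟨_, hyU⟩
      · exact notUV D hwU hwV
      · exact notUV D hyU hy

lemma adjV {x y : α} (hx : x ∈ D.V) (h : D.niche.Adj x y) : y ∈ D.V := by
  rcases memUV D y with hy | hy
  · exact absurd hx (fun hx => notUV D (adjU D hy h.symm) hx)
  · exact hy

lemma reach_closed (P : α → Prop) (hP : ∀ a b, P a → D.niche.Adj a b → P b)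
    {a b : α} (ha : P a) (hr : D.niche.Reachable a b) : P b := by
  obtain ⟨p⟩ := hr
  revert ha
  induction p with
  | nil => exact id
  | cons h _ ih => exact fun ha => ih (hP _ _ ha h)

/-- reach x y via a common neighbor (or x = y). -/
lemma step {x y : α} (hw : (∃ w, D.A x w ∧ D.A y w) ∨ (∃ w, D.A w x ∧ D.A w y)) :
    D.niche.Reachable x y := by
  by_cases hxy : x = y
  · exact hxy ▸ SimpleGraph.Reachable.refl _
  · exact SimpleGraph.Adj.reachable ⟨hxy, hw⟩

lemma toInduce : ∀ {a b : α} (p : D.niche.Walk a b) (ha : a ∈ D.U) (hb : b ∈ D.U),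
    (D.niche.induce D.U).Reachable ⟨a, ha⟩ ⟨b, hb⟩ := by
  intro a b p
  induction p with
  | nil => intro ha hb; rfl
  | @cons a c b h p ih =>
    intro ha hb
    have hc : c ∈ D.U := adjU D ha h
    have h1 : (D.niche.induce D.U).Adj ⟨a, ha⟩ ⟨c, hc⟩ := h
    exact h1.reachable.trans (ih hc hb)

end BipAux

open BipAux in
theorem stmt15 {α : Type*} (D : BipTournament α) (hU : D.U.Nonempty) (hV : D.V.Nonempty)
    (h : ¬ (D.niche.induce D.U).Connected) :
    ∀ x y : α, D.niche.Reachable x y → x ≠ y → D.niche.Adj x y := by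
  -- extract two vertices of U not reachable from each other
  obtain ⟨u1, hu1, u2, hu2, hnr⟩ :
      ∃ u1 ∈ D.U, ∃ u2 ∈ D.U, ¬ D.niche.Reachable u1 u2 := by
    by_contra hc
    push_neg at hc
    apply h
    rw [SimpleGraph.connected_iff]
    refine ⟨?_, hU.to_subtype⟩
    rintro ⟨a, ha⟩ ⟨b, hb⟩
    obtain ⟨p⟩ := hc a ha b hb
    exact toInduce D p ha hb
  have hnr' : ¬ D.niche.Reachable u2 u1 := fun hr => hnr hr.symm
  -- the key dichotomy on V
  have L : ∀ v ∈ D.V, (D.A u1 v ∧ D.A v u2) ∨ (D.A u2 v ∧ D.A v u1) := by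
    intro v hv
    rcases (Xor.or (D.orient u1 hu1 v hv)) with h1 | h1 <;>
      rcases (Xor.or (D.orient u2 hu2 v hv)) with h2 | h2
    · exact absurd (step D (Or.inl ⟨v, h1, h2⟩)) hnr
    · exact Or.inl ⟨h1, h2⟩
    · exact Or.inr ⟨h2, h1⟩
    · exact absurd (step D (Or.inr ⟨v, h1, h2⟩)) hnr
  -- orientation of arcs from U-vertices in each component
  have prop1 : ∀ x ∈ D.U, D.niche.Reachable u1 x →
      ∀ v ∈ D.V, (D.A u1 v ∧ D.A v u2 → D.A x v) ∧ (D.A u2 v ∧ D.A v u1 → D.A v x) := by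
    intro x hx hr v hv
    constructor
    · rintro ⟨h1v, hv2⟩
      rcases (Xor.or (D.orient x hx v hv)) with hxv | hvx
      · exact hxv
      · exact absurd (hr.trans (step D (Or.inr ⟨v, hvx, hv2⟩))) hnr
    · rintro ⟨h2v, hv1⟩
      rcases (Xor.or (D.orient x hx v hv)) with hxv | hvx
      · exact absurd (hr.trans (step D (Or.inl ⟨v, hxv, h2v⟩))) hnr
      · exact hvx
  have prop2 : ∀ x ∈ D.U, D.niche.Reachable u2 x →
      ∀ v ∈ D.V, (D.A u2 v ∧ D.A v u1 → D.A x v) ∧ (D.A u1 v ∧ D.A v u2 → D.A v x) := by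
    intro x hx hr v hv
    constructor
    · rintro ⟨h2v, hv1⟩
      rcases (Xor.or (D.orient x hx v hv)) with hxv | hvx
      · exact hxv
      · exact absurd (hr.trans (step D (Or.inr ⟨v, hvx, hv1⟩))) hnr'
    · rintro ⟨h1v, hv2⟩
      rcases (Xor.or (D.orient x hx v hv)) with hxv | hvx
      · exact absurd (hr.trans (step D (Or.inl ⟨v, hxv, h1v⟩))) hnr'
      · exact hvx
  -- every vertex of U is reachable from u1 or u2
  have dich : ∀ x ∈ D.U, D.niche.Reachable u1 x ∨ D.niche.Reachable u2 x := by
    intro x hx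
    obtain ⟨v0, hv0⟩ := hV
    rcases L v0 hv0 with ⟨h1v, hv2⟩ | ⟨h2v, hv1⟩ <;>
      rcases (Xor.or (D.orient x hx v0 hv0)) with hxv | hvx
    · exact Or.inl (step D (Or.inl ⟨v0, h1v, hxv⟩))
    · exact Or.inr (step D (Or.inr ⟨v0, hv2, hvx⟩))
    · exact Or.inr (step D (Or.inl ⟨v0, h2v, hxv⟩))
    · exact Or.inl (step D (Or.inr ⟨v0, hv1, hvx⟩))
  -- V1 is closed under adjacency
  have Vclosed : ∀ a b, (a ∈ D.V ∧ D.A u1 a ∧ D.A a u2) → D.niche.Adj a b →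
      (b ∈ D.V ∧ D.A u1 b ∧ D.A b u2) := by
    rintro a b ⟨haV, h1a, ha2⟩ hab
    have hbV : b ∈ D.V := adjV D haV hab
    refine ⟨hbV, ?_⟩
    rcases L b hbV with hb | ⟨h2b, hb1⟩
    · exact hb
    exfalso
    rcases hab.2 with ⟨u, hau, hbu⟩ | ⟨u, hua, hub⟩
    · -- u shares in-neighbor b with u1, and in-neighbor a with u2
      exact hnr ((step D (Or.inr ⟨b, hb1, hbu⟩)).trans (step D (Or.inr ⟨a, hau, ha2⟩)))
    · -- u shares out-neighbor a with u1, and out-neighbor b with u2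
      exact hnr ((step D (Or.inl ⟨a, h1a, hua⟩)).trans (step D (Or.inl ⟨b, h2b, hub⟩)).symm)
  -- main argument
  intro x y hr hxy
  rcases memUV D x with hxU | hxV
  · -- both in U
    have hyU : y ∈ D.U := reach_closed D (· ∈ D.U) (fun a b ha hab => adjU D ha hab) hxU hr
    obtain ⟨v0, hv0⟩ := hV
    rcases dich x hxU with h1x | h2x
    · have h1y := h1x.trans hr
      rcases L v0 hv0 with hv | hv
      · exact ⟨hxy, Or.inl ⟨v0, (prop1 x hxU h1x v0 hv0).1 hv, (prop1 y hyU h1y v0 hv0).1 hv⟩⟩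
      · exact ⟨hxy, Or.inr ⟨v0, (prop1 x hxU h1x v0 hv0).2 hv, (prop1 y hyU h1y v0 hv0).2 hv⟩⟩
    · have h2y := h2x.trans hr
      rcases L v0 hv0 with hv | hv
      · exact ⟨hxy, Or.inr ⟨v0, (prop2 x hxU h2x v0 hv0).2 hv, (prop2 y hyU h2y v0 hv0).2 hv⟩⟩
      · exact ⟨hxy, Or.inl ⟨v0, (prop2 x hxU h2x v0 hv0).1 hv, (prop2 y hyU h2y v0 hv0).1 hv⟩⟩
  · -- both in V
    have hyV : y ∈ D.V := reach_closed D (· ∈ D.V) (fun a b ha hab => adjV D ha hab) hxV hr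
    rcases L x hxV with ⟨h1x, hx2⟩ | ⟨h2x, hx1⟩
    · have hy := reach_closed D (fun a => a ∈ D.V ∧ D.A u1 a ∧ D.A a u2) Vclosed
        ⟨hxV, h1x, hx2⟩ hr
      exact ⟨hxy, Or.inr ⟨u1, h1x, hy.2.1⟩⟩
    · -- symmetric: V2 closed; use closure for the "swapped" tournament? do it directly
      have Vclosed2 : ∀ a b, (a ∈ D.V ∧ D.A u2 a ∧ D.A a u1) → D.niche.Adj a b →
          (b ∈ D.V ∧ D.A u2 b ∧ D.A b u1) := by
        rintro a b ⟨haV, h2a, ha1⟩ hab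
        have hbV : b ∈ D.V := adjV D haV hab
        refine ⟨hbV, ?_⟩
        rcases L b hbV with ⟨h1b, hb2⟩ | hb
        · exfalso
          rcases hab.2 with ⟨u, hau, hbu⟩ | ⟨u, hua, hub⟩
          · exact hnr ((step D (Or.inr ⟨a, ha1, hau⟩)).trans (step D (Or.inr ⟨b, hb2, hbu⟩)).symm)
          · exact hnr ((step D (Or.inl ⟨b, h1b, hub⟩)).trans (step D (Or.inl ⟨a, h2a, hua⟩)).symm)
        · exact hb
      have hy := reach_closed D (fun a => a ∈ D.V ∧ D.A u2 a ∧ D.A a u1) Vclosed2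
        ⟨hxV, h2x, hx1⟩ hr
      exact ⟨hxy, Or.inr ⟨u2, h2x, hy.2.1⟩⟩
end

section
/- Let G be the niche graph of a bipartite tournament. Then every connected component of G contains at most 2·ω(G) vertices, where ω(G) is the clique number of G, and |V(G)| ≤ 4·ω(G). -/
noncomputable def cliqueNum {α : Type*} (G : SimpleGraph α) : ℕ :=
  sSup {n | ∃ s : Finset α, G.IsNClique n s}

lemma clique_le_cliqueNum {α : Type*} [Fintype α] (G : SimpleGraph α) (S : Set α)
    (h : G.IsClique S) : S.ncard ≤ cliqueNum G := by
  classical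
  have hb : BddAbove {n | ∃ s : Finset α, G.IsNClique n s} := by
    refine ⟨Fintype.card α, fun n hn => ?_⟩
    obtain ⟨s, hs⟩ := hn
    exact hs.card_eq ▸ Finset.card_le_univ s
  refine le_csSup hb ⟨S.toFinset, ?_, ?_⟩
  · simpa using h
  · rw [Set.ncard_eq_toFinset_card']

lemma adj_part {α : Type*} (D : BipTournament α) {x y : α} (h : D.niche.Adj x y) :
    (x ∈ D.U ∧ y ∈ D.U) ∨ (x ∈ D.V ∧ y ∈ D.V) := by
  obtain ⟨hne, ⟨w, h1, h2⟩ | ⟨w, h1, h2⟩⟩ := h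
  · rcases D.arcs x w h1 with ⟨hx, hw⟩ | ⟨hx, hw⟩ <;>
    rcases D.arcs y w h2 with ⟨hy, hw'⟩ | ⟨hy, hw'⟩
    · exact Or.inl ⟨hx, hy⟩
    · exact absurd (Set.disjoint_left.mp D.disj hw' hw) not_false
    · exact absurd (Set.disjoint_left.mp D.disj hw hw') not_false
    · exact Or.inr ⟨hx, hy⟩
  · rcases D.arcs w x h1 with ⟨hw, hx⟩ | ⟨hw, hx⟩ <;>
    rcases D.arcs w y h2 with ⟨hw', hy⟩ | ⟨hw', hy⟩
    · exact Or.inr ⟨hx, hy⟩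
    · exact absurd (Set.disjoint_left.mp D.disj hw hw') not_false
    · exact absurd (Set.disjoint_left.mp D.disj hw' hw) not_false
    · exact Or.inl ⟨hx, hy⟩

lemma reach_U {α : Type*} (D : BipTournament α) {x y : α} (hx : x ∈ D.U)
    (h : D.niche.Reachable x y) : y ∈ D.U := by
  obtain ⟨w⟩ := h
  induction w with
  | nil => exact hx
  | cons hadj p ih =>
    rcases adj_part D hadj with ⟨_, h2⟩ | ⟨h1, _⟩
    · exact ih h2
    · exact absurd (Set.disjoint_left.mp D.disj hx h1) not_false

lemma reach_V {α : Type*} (D : BipTournament α) {x y : α} (hx : x ∈ D.V)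
    (h : D.niche.Reachable x y) : y ∈ D.V := by
  obtain ⟨w⟩ := h
  induction w with
  | nil => exact hx
  | cons hadj p ih =>
    rcases adj_part D hadj with ⟨h1, _⟩ | ⟨_, h2⟩
    · exact absurd (Set.disjoint_left.mp D.disj h1 hx) not_false
    · exact ih h2

lemma ncard_U_le {α : Type*} [Fintype α] (D : BipTournament α) (hV : D.V.Nonempty) :
    D.U.ncard ≤ 2 * cliqueNum D.niche := by
  obtain ⟨v, hv⟩ := hV
  have hsub : D.U ⊆ {u ∈ D.U | D.A u v} ∪ {u ∈ D.U | D.A v u} := by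
    intro u hu
    rcases D.orient u hu v hv with ⟨h, _⟩ | ⟨h, _⟩
    · exact Or.inl ⟨hu, h⟩
    · exact Or.inr ⟨hu, h⟩
  have h1 : D.niche.IsClique {u ∈ D.U | D.A u v} :=
    fun a ha b hb hab => ⟨hab, Or.inl ⟨v, ha.2, hb.2⟩⟩
  have h2 : D.niche.IsClique {u ∈ D.U | D.A v u} :=
    fun a ha b hb hab => ⟨hab, Or.inr ⟨v, ha.2, hb.2⟩⟩
  calc D.U.ncard ≤ ({u ∈ D.U | D.A u v} ∪ {u ∈ D.U | D.A v u}).ncard :=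
        Set.ncard_le_ncard hsub (Set.toFinite _)
    _ ≤ {u ∈ D.U | D.A u v}.ncard + {u ∈ D.U | D.A v u}.ncard := Set.ncard_union_le _ _
    _ ≤ cliqueNum D.niche + cliqueNum D.niche :=
        add_le_add (clique_le_cliqueNum _ _ h1) (clique_le_cliqueNum _ _ h2)
    _ = 2 * cliqueNum D.niche := (two_mul _).symm

lemma ncard_V_le {α : Type*} [Fintype α] (D : BipTournament α) (hU : D.U.Nonempty) :
    D.V.ncard ≤ 2 * cliqueNum D.niche := by
  obtain ⟨u, hu⟩ := hU
  have hsub : D.V ⊆ {w ∈ D.V | D.A w u} ∪ {w ∈ D.V | D.A u w} := by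
    intro w hw
    rcases D.orient u hu w hw with ⟨h, _⟩ | ⟨h, _⟩
    · exact Or.inr ⟨hw, h⟩
    · exact Or.inl ⟨hw, h⟩
  have h1 : D.niche.IsClique {w ∈ D.V | D.A w u} :=
    fun a ha b hb hab => ⟨hab, Or.inl ⟨u, ha.2, hb.2⟩⟩
  have h2 : D.niche.IsClique {w ∈ D.V | D.A u w} :=
    fun a ha b hb hab => ⟨hab, Or.inr ⟨u, ha.2, hb.2⟩⟩
  calc D.V.ncard ≤ ({w ∈ D.V | D.A w u} ∪ {w ∈ D.V | D.A u w}).ncard :=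
        Set.ncard_le_ncard hsub (Set.toFinite _)
    _ ≤ {w ∈ D.V | D.A w u}.ncard + {w ∈ D.V | D.A u w}.ncard := Set.ncard_union_le _ _
    _ ≤ cliqueNum D.niche + cliqueNum D.niche :=
        add_le_add (clique_le_cliqueNum _ _ h1) (clique_le_cliqueNum _ _ h2)
    _ = 2 * cliqueNum D.niche := (two_mul _).symm

theorem stmt18 {α : Type*} [Fintype α] (D : BipTournament α)
    (hU : D.U.Nonempty) (hV : D.V.Nonempty) :
    (∀ x : α, {y | D.niche.Reachable x y}.ncard ≤ 2 * cliqueNum D.niche) ∧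
    Fintype.card α ≤ 4 * cliqueNum D.niche := by
  constructor
  · intro x
    have hx : x ∈ D.U ∪ D.V := D.cover ▸ Set.mem_univ x
    rcases hx with hx | hx
    · have hsub : {y | D.niche.Reachable x y} ⊆ D.U := fun y hy => reach_U D hx hy
      exact le_trans (Set.ncard_le_ncard hsub (Set.toFinite _)) (ncard_U_le D hV)
    · have hsub : {y | D.niche.Reachable x y} ⊆ D.V := fun y hy => reach_V D hx hy
      exact le_trans (Set.ncard_le_ncard hsub (Set.toFinite _)) (ncard_V_le D hU)
  · have : Fintype.card α = (D.U ∪ D.V).ncard := by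
      rw [D.cover, Set.ncard_univ, Nat.card_eq_fintype_card]
    rw [this]
    calc (D.U ∪ D.V).ncard ≤ D.U.ncard + D.V.ncard := Set.ncard_union_le _ _
      _ ≤ 2 * cliqueNum D.niche + 2 * cliqueNum D.niche :=
          add_le_add (ncard_U_le D hV) (ncard_V_le D hU)
      _ = 4 * cliqueNum D.niche := by ring
end
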